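/- arXiv:2012.09063 — 4 statements merged into one kernel-verified Lean document; each statement's English description precedes it below -/
import Mathlib

section
/- Let f* > 0, 0 < η ≤ 1, and let κ_1, ..., κ_p be nonnegative reals satisfying p·κ_j ≥ η·(f* - (κ_1 + ... + κ_{j-1})) for all j = 1, ..., p. Then κ_1 + ... + κ_p ≥ f* · (1 - ((p-η)/p)^p). -/
theorem pseudo_greedy_sum_lower_bound (p : ℕ) (hp : 1 ≤ p) (fstar : ℝ) (hf : 0 < fstar)
    (η : ℝ) (hη0 : 0 < η) (hη1 : η ≤ 1)
    (κ : ℕ → ℝ) (hκ : ∀ j, 0 ≤ κ j)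
    (hrec : ∀ j, 1 ≤ j → j ≤ p →
      (p : ℝ) * κ j ≥ η * (fstar - ∑ l ∈ Finset.Ico 1 j, κ l)) :
    ∑ j ∈ Finset.Icc 1 p, κ j ≥ fstar * (1 - (((p : ℝ) - η) / (p : ℝ)) ^ p) := by
  have hp0 : (0:ℝ) < (p:ℝ) := by exact_mod_cast hp
  set r : ℝ := ((p:ℝ) - η) / (p:ℝ) with hr
  have hr0 : 0 ≤ r := by
    apply div_nonneg _ hp0.le
    have : η ≤ (p:ℝ) := hη1.trans (by exact_mod_cast hp)
    linarith
  have key : ∀ j, j ≤ p → fstar - ∑ l ∈ Finset.Icc 1 j, κ l ≤ fstar * r ^ j := by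
    intro j
    induction j with
    | zero => intro _; simp
    | succ n ih =>
      intro hnp
      have hn : n ≤ p := Nat.le_of_succ_le hnp
      have ihn := ih hn
      have hrecn := hrec (n+1) (Nat.le_add_left 1 n) hnp
      have hico : Finset.Ico 1 (n+1) = Finset.Icc 1 n := rfl
      rw [hico] at hrecn
      have hsum : ∑ l ∈ Finset.Icc 1 (n+1), κ l
          = ∑ l ∈ Finset.Icc 1 n, κ l + κ (n+1) := by
        rw [Finset.sum_Icc_succ_top (by omega)]
      have hκbound : κ (n+1) ≥ (η / (p:ℝ)) * (fstar - ∑ l ∈ Finset.Icc 1 n, κ l) := by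
        rw [ge_iff_le, div_mul_eq_mul_div, div_le_iff₀ hp0]
        linarith [hrecn]
      have step : fstar - ∑ l ∈ Finset.Icc 1 (n+1), κ l
          ≤ (fstar - ∑ l ∈ Finset.Icc 1 n, κ l) * (1 - η / (p:ℝ)) := by
        rw [hsum]
        have h2 : (fstar - ∑ l ∈ Finset.Icc 1 n, κ l) * (1 - η / (p:ℝ))
            = (fstar - ∑ l ∈ Finset.Icc 1 n, κ l)
              - η / (p:ℝ) * (fstar - ∑ l ∈ Finset.Icc 1 n, κ l) := by ring
        rw [h2]; linarith [hκbound]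
      have hr1 : (1 - η / (p:ℝ)) = r := by rw [hr]; field_simp
      rw [hr1] at step
      calc fstar - ∑ l ∈ Finset.Icc 1 (n+1), κ l
          ≤ (fstar - ∑ l ∈ Finset.Icc 1 n, κ l) * r := step
        _ ≤ fstar * r ^ n * r := by nlinarith [ihn, hr0]
        _ = fstar * r ^ (n+1) := by ring
  have := key p le_rfl
  nlinarith [this]
end

section
/- Under the hypothesis p·ψ_j ≥ f* - Σ_{l<j} ψ_l for all j ≤ k (with ψ_l ≥ 0, f* ≥ 0), the partial sums satisfy p · Σ_{l=1}^{k} ψ_l ≥ f* · Σ_{i=0}^{k-1} ((p-1)/p)^i for every k = 1, ..., p. -/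
theorem greedy_partial_sum_geometric (p : ℕ) (hp : 1 ≤ p) (fstar : ℝ) (hf : 0 ≤ fstar)
    (ψ : ℕ → ℝ) (hψ : ∀ j, 0 ≤ ψ j) (k : ℕ) (hk1 : 1 ≤ k) (hkp : k ≤ p)
    (hrec : ∀ j, 1 ≤ j → j ≤ k →
      (p : ℝ) * ψ j ≥ fstar - ∑ l ∈ Finset.Ico 1 j, ψ l) :
    (p : ℝ) * ∑ l ∈ Finset.Icc 1 k, ψ l ≥
      fstar * ∑ i ∈ Finset.range k, (((p : ℝ) - 1) / (p : ℝ)) ^ i := by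
  have hp0 : (0:ℝ) < p := by exact_mod_cast hp
  induction k, hk1 using Nat.le_induction with
  | base =>
    have h := hrec 1 le_rfl le_rfl
    simpa using h
  | succ n hn ih =>
    have ihn := ih (le_trans (Nat.le_succ n) hkp)
      (fun j hj1 hj2 => hrec j hj1 (le_trans hj2 (Nat.le_succ n)))
    set S := ∑ l ∈ Finset.Icc 1 n, ψ l with hS
    set G := ∑ i ∈ Finset.range n, (((p : ℝ) - 1) / (p : ℝ)) ^ i with hG
    have hsum : ∑ l ∈ Finset.Icc 1 (n+1), ψ l = ψ (n+1) + S := by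
      rw [Finset.sum_Icc_succ_top (by omega)]; ring
    have hrec' := hrec (n+1) (by omega) le_rfl
    have hIco : Finset.Ico 1 (n+1) = Finset.Icc 1 n := rfl
    rw [hIco] at hrec'
    have hSnn : 0 ≤ S := Finset.sum_nonneg fun i _ => hψ i
    have hgeo : ∑ i ∈ Finset.range (n+1), (((p : ℝ) - 1) / (p : ℝ)) ^ i
        = (((p:ℝ)-1)/p) * G + 1 := geom_sum_succ
    have hr : (0:ℝ) ≤ ((p:ℝ)-1)/p := by
      apply div_nonneg _ hp0.le
      have : (1:ℝ) ≤ p := by exact_mod_cast hp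
      linarith
    have hmul : (((p:ℝ)-1)/p) * (fstar * G) ≤ (((p:ℝ)-1)/p) * ((p:ℝ) * S) :=
      mul_le_mul_of_nonneg_left ihn hr
    have heq : (((p:ℝ)-1)/p) * ((p:ℝ) * S) = ((p:ℝ)-1) * S := by
      field_simp
    rw [hsum, hgeo]
    nlinarith [hrec', hmul, heq]
end

section
/- For the one-dimensional maximum coverage problem with a single facility: given finitely many weighted intervals [a_i, a_i + w_i] with weights v_i ≥ 0 and a facility interval [x, x + w] of fixed width w > 0, the total covered reward F(x) = Σ_i v_i · length([x, x+w] ∩ [a_i, a_i + w_i]) attains its maximum over x ∈ ℝ at some point of the finite set {a_i : i} ∪ {a_i + w_i - w : i}. -/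
open MeasureTheory

private lemma max0_cvx (t s p q x' : ℝ) (ht : 0 ≤ t) (hs : 0 ≤ s)
    (hx : x' = t * p + s * q) :
    max x' 0 ≤ t * max p 0 + s * max q 0 := by
  have h1 : t * p ≤ t * max p 0 := mul_le_mul_of_nonneg_left (le_max_left _ _) ht
  have h2 : s * q ≤ s * max q 0 := mul_le_mul_of_nonneg_left (le_max_left _ _) hs
  have h3 : 0 ≤ t * max p 0 := mul_nonneg ht (le_max_right _ _)
  have h4 : 0 ≤ s * max q 0 := mul_nonneg hs (le_max_right _ _)
  exact max_le (by linarith) (by linarith)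

theorem oneD_single_facility_max_at_inner_DCV (n : ℕ) (hn : 0 < n)
    (a wi : Fin n → ℝ) (v : Fin n → ℝ) (hv : ∀ i, 0 ≤ v i) (hwi : ∀ i, 0 < wi i)
    (w : ℝ) (hw : 0 < w) :
    ∃ xstar : ℝ,
      (xstar ∈ Set.range a ∪ Set.range (fun i => a i + wi i - w)) ∧
      ∀ x : ℝ,
        (∑ i, v i * (volume (Set.Icc x (x + w) ∩ Set.Icc (a i) (a i + wi i))).toReal) ≤
        (∑ i, v i * (volume (Set.Icc xstar (xstar + w) ∩ Set.Icc (a i) (a i + wi i))).toReal) := by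
  classical
  set b : Fin n → ℝ := fun i => a i + wi i with hb
  set len : ℝ → Fin n → ℝ := fun x i => max (min (x + w) (b i) - max x (a i)) 0 with hlen
  have hvol : ∀ x : ℝ, ∀ i, (volume (Set.Icc x (x + w) ∩ Set.Icc (a i) (a i + wi i))).toReal
      = len x i := by
    intro x i
    rw [Set.Icc_inter_Icc, Real.volume_Icc, ENNReal.toReal_ofReal']
  set F : ℝ → ℝ := fun x => ∑ i, v i * len x i with hF
  have hFeq : ∀ x : ℝ,
      (∑ i, v i * (volume (Set.Icc x (x + w) ∩ Set.Icc (a i) (a i + wi i))).toReal) = F x := by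
    intro x
    simp only [hF, hvol]
  -- length formulas
  have lenL : ∀ (x : ℝ) (i : Fin n), x ≤ a i → x + w ≤ b i →
      len x i = max (x + w - a i) 0 := by
    intro x i h1 h2
    simp only [hlen]
    rw [min_eq_left h2, max_eq_right h1]
  have lenR : ∀ (x : ℝ) (i : Fin n), a i ≤ x → b i ≤ x + w →
      len x i = max (b i - x) 0 := by
    intro x i h1 h2
    simp only [hlen]
    rw [min_eq_right h2, max_eq_left h1]
  have lenW : ∀ (x : ℝ) (i : Fin n), a i ≤ x → x + w ≤ b i → len x i = w := by
    intro x i h1 h2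
    simp only [hlen]
    rw [min_eq_left h2, max_eq_left h1]
    have : x + w - x = w := by ring
    rw [this, max_eq_left hw.le]
  have lenWi : ∀ (x : ℝ) (i : Fin n), x ≤ a i → b i ≤ x + w → len x i = wi i := by
    intro x i h1 h2
    simp only [hlen]
    rw [min_eq_right h2, max_eq_right h1]
    have : b i - a i = wi i := by simp [hb]
    rw [this, max_eq_left (hwi i).le]
  -- candidate set
  set S : Finset ℝ := Finset.image a Finset.univ ∪ Finset.image (fun i => b i - w) Finset.univ
    with hS
  have haS : ∀ i, a i ∈ S := by
    intro i
    simp [hS]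
  have hbS : ∀ i, b i - w ∈ S := by
    intro i
    simp only [hS, Finset.mem_union, Finset.mem_image, Finset.mem_univ, true_and]
    right
    exact ⟨i, rfl⟩
  have hSne : S.Nonempty := ⟨a ⟨0, hn⟩, haS _⟩
  obtain ⟨xstar, hxS, hxmax⟩ := S.exists_max_image F hSne
  refine ⟨xstar, ?_, ?_⟩
  · simp only [hS, Finset.mem_union, Finset.mem_image, Finset.mem_univ, true_and] at hxS
    rcases hxS with ⟨i, hi⟩ | ⟨i, hi⟩
    · exact Or.inl ⟨i, hi⟩
    · exact Or.inr ⟨i, hi⟩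
  · intro x
    rw [hFeq, hFeq]
    set s0 : ℝ := S.min' hSne with hs0
    set s1 : ℝ := S.max' hSne with hs1
    rcases le_total x s0 with hx0 | hx0'
    · -- left of all candidates: monotone nondecreasing
      have hstep : F x ≤ F s0 := by
        apply Finset.sum_le_sum
        intro i _
        have h1 : s0 ≤ a i := S.min'_le _ (haS i)
        have h2 : s0 ≤ b i - w := S.min'_le _ (hbS i)
        have := lenL x i (by linarith) (by linarith)
        rw [this, lenL s0 i h1 (by linarith)]
        exact mul_le_mul_of_nonneg_left (max_le_max (by linarith) le_rfl) (hv i)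
      exact hstep.trans (hxmax s0 (S.min'_mem hSne))
    rcases le_total s1 x with hx1 | hx1'
    · -- right of all candidates: monotone nonincreasing
      have hstep : F x ≤ F s1 := by
        apply Finset.sum_le_sum
        intro i _
        have h1 : a i ≤ s1 := S.le_max' _ (haS i)
        have h2 : b i - w ≤ s1 := S.le_max' _ (hbS i)
        have := lenR x i (by linarith) (by linarith)
        rw [this, lenR s1 i h1 (by linarith)]
        exact mul_le_mul_of_nonneg_left (max_le_max (by linarith) le_rfl) (hv i)
      exact hstep.trans (hxmax s1 (S.max'_mem hSne))
    -- middle case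
    have hTne : (S.filter (· ≤ x)).Nonempty := ⟨s0, Finset.mem_filter.mpr ⟨S.min'_mem hSne, hx0'⟩⟩
    have hUne : (S.filter (x ≤ ·)).Nonempty := ⟨s1, Finset.mem_filter.mpr ⟨S.max'_mem hSne, hx1'⟩⟩
    set l : ℝ := (S.filter (· ≤ x)).max' hTne with hldef
    set r : ℝ := (S.filter (x ≤ ·)).min' hUne with hrdef
    have hlS : l ∈ S := (Finset.mem_filter.mp ((S.filter (· ≤ x)).max'_mem hTne)).1
    have hrS : r ∈ S := (Finset.mem_filter.mp ((S.filter (x ≤ ·)).min'_mem hUne)).1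
    have hlx : l ≤ x := (Finset.mem_filter.mp ((S.filter (· ≤ x)).max'_mem hTne)).2
    have hxr : x ≤ r := (Finset.mem_filter.mp ((S.filter (x ≤ ·)).min'_mem hUne)).2
    have hgap : ∀ c ∈ S, c ≤ l ∨ r ≤ c := by
      intro c hc
      rcases le_total c x with h | h
      · exact Or.inl ((S.filter (· ≤ x)).le_max' c (Finset.mem_filter.mpr ⟨hc, h⟩))
      · exact Or.inr ((S.filter (x ≤ ·)).min'_le c (Finset.mem_filter.mpr ⟨hc, h⟩))
    rcases lt_or_ge l r with hlr | hlr
    · -- convexity on [l, r]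
      have hrl : (0:ℝ) < r - l := by linarith
      set t : ℝ := (r - x) / (r - l) with htdef
      set s : ℝ := (x - l) / (r - l) with hsdef
      have ht : 0 ≤ t := div_nonneg (by linarith) hrl.le
      have hs : 0 ≤ s := div_nonneg (by linarith) hrl.le
      have hts : t + s = 1 := by
        rw [htdef, hsdef, ← add_div, show r - x + (x - l) = r - l by ring,
          div_self hrl.ne']
      have hxeq : x = t * l + s * r := by
        rw [htdef, hsdef, div_mul_eq_mul_div, div_mul_eq_mul_div, ← add_div,
          show (r - x) * l + (x - l) * r = x * (r - l) by ring, mul_div_assoc,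
          div_self hrl.ne', mul_one]
      have hper : ∀ i : Fin n, len x i ≤ t * len l i + s * len r i := by
        intro i
        rcases hgap (a i) (haS i) with hal | har
        · rcases hgap (b i - w) (hbS i) with hbl | hbr
          · -- a i ≤ l, b i - w ≤ l : right formula
            rw [lenR x i (by linarith) (by linarith), lenR l i hal (by linarith),
              lenR r i (by linarith) (by linarith)]
            apply max0_cvx _ _ _ _ _ ht hs
            linear_combination (-(b i)) * hts - hxeq
          · -- a i ≤ l, r ≤ b i - w : constant w
            rw [lenW x i (by linarith) (by linarith), lenW l i hal (by linarith),
              lenW r i (by linarith) (by linarith)]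
            have : t * w + s * w = w := by linear_combination w * hts
            linarith
        · rcases hgap (b i - w) (hbS i) with hbl | hbr
          · -- r ≤ a i, b i - w ≤ l : constant wi i
            rw [lenWi x i (by linarith) (by linarith), lenWi l i (by linarith) (by linarith),
              lenWi r i har (by linarith)]
            have : t * wi i + s * wi i = wi i := by linear_combination (wi i) * hts
            linarith
          · -- r ≤ a i, r ≤ b i - w : left formula
            rw [lenL x i (by linarith) (by linarith), lenL l i (by linarith) (by linarith),
              lenL r i har (by linarith)]
            apply max0_cvx _ _ _ _ _ ht hs
            linear_combination (a i - w) * hts + hxeq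
      have hsum : F x ≤ t * F l + s * F r := by
        simp only [hF]
        rw [Finset.mul_sum, Finset.mul_sum, ← Finset.sum_add_distrib]
        apply Finset.sum_le_sum
        intro i _
        calc v i * len x i ≤ v i * (t * len l i + s * len r i) :=
              mul_le_mul_of_nonneg_left (hper i) (hv i)
          _ = t * (v i * len l i) + s * (v i * len r i) := by ring
      have h1 : t * F l ≤ t * F xstar := mul_le_mul_of_nonneg_left (hxmax l hlS) ht
      have h2 : s * F r ≤ s * F xstar := mul_le_mul_of_nonneg_left (hxmax r hrS) hs
      have h3 : t * F xstar + s * F xstar = F xstar := by linear_combination (F xstar) * hts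
      linarith
    · -- x coincides with a candidate
      have hxl : x = l := le_antisymm (hxr.trans hlr) hlx
      exact hxmax x (hxl ▸ hlS)
end

section
/- Let f(x) = Σ_{j=1}^{p} v · length([x + c_j, x + c_j + w] ∩ [a, a + W]) where c_1, ..., c_p are fixed offsets and the p intervals [x + c_j, x + c_j + w] may overlap; define g(x) = v · length((∪_j [x + c_j, x + c_j + w]) ∩ [a, a + W]). Then g is continuous piecewise linear in x, and every breakpoint x̂ of g satisfies x̂ + c_j ∈ {a - w, a, a + W - w, a + W} for some j. -/
open MeasureTheory

open Set in
theorem union_translated_intervals_coverage_piecewise_linear (p : ℕ)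
    (c : Fin p → ℝ) (v w a W : ℝ) (hv : 0 ≤ v) (hw : 0 < w) (hW : 0 < W)
    (g : ℝ → ℝ)
    (hg : g = fun x : ℝ => v *
      (volume ((⋃ j, Set.Icc (x + c j) (x + c j + w)) ∩ Set.Icc a (a + W))).toReal) :
    Continuous g ∧
    ∀ x : ℝ, (∀ j : Fin p, x + c j ∉ ({a - w, a, a + W - w, a + W} : Set ℝ)) →
      ∃ δ > 0, ∃ α β : ℝ, ∀ y ∈ Set.Ioo (x - δ) (x + δ), g y = α * y + β := by
  classical
  set S : Set ℝ := ⋃ j, Icc (c j) (c j + w) with hS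
  have hSm : MeasurableSet S := MeasurableSet.iUnion fun j => measurableSet_Icc
  have hSfin : volume S ≠ ⊤ := by
    have h1 : volume S ≤ ∑ j, volume (Icc (c j) (c j + w)) := measure_iUnion_fintype_le _ _
    refine ne_top_of_le_ne_top ?_ h1
    refine (ENNReal.sum_lt_top.2 fun j _ => ?_).ne
    simp [Real.volume_Icc]
  set F : ℝ → ℝ := fun t => (volume (S ∩ Iic t)).toReal with hF
  have Fadd : ∀ t s : ℝ, t ≤ s → F s = F t + (volume (S ∩ Ioc t s)).toReal := by
    intro t s hts
    have hsplit : S ∩ Iic s = (S ∩ Iic t) ∪ (S ∩ Ioc t s) := by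
      rw [← inter_union_distrib_left, Iic_union_Ioc_eq_Iic hts]
    have hdisj : Disjoint (S ∩ Iic t) (S ∩ Ioc t s) :=
      (Iic_disjoint_Ioc le_rfl).mono inter_subset_right inter_subset_right
    have h1 : volume (S ∩ Iic t) ≠ ⊤ :=
      ne_top_of_le_ne_top hSfin (measure_mono inter_subset_left)
    have h2 : volume (S ∩ Ioc t s) ≠ ⊤ := by
      refine ne_top_of_le_ne_top ?_ (measure_mono inter_subset_right)
      simp [Real.volume_Ioc]
    simp only [hF]
    rw [hsplit, measure_union hdisj (hSm.inter measurableSet_Ioc),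
      ENNReal.toReal_add h1 h2]
  -- g in terms of F
  have gF : ∀ x : ℝ, g x = v * (F (a + W - x) - F (a - x)) := by
    intro x
    have htrans : (⋃ j, Icc (x + c j) (x + c j + w)) ∩ Icc a (a + W)
        = (fun t => -x + t) ⁻¹' (S ∩ Icc (a - x) (a + W - x)) := by
      ext t
      simp only [hS, mem_inter_iff, mem_iUnion, mem_Icc, mem_preimage]
      constructor
      · rintro ⟨⟨j, h1, h2⟩, h3, h4⟩
        exact ⟨⟨j, by linarith, by linarith⟩, by linarith, by linarith⟩
      · rintro ⟨⟨j, h1, h2⟩, h3, h4⟩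
        exact ⟨⟨j, by linarith, by linarith⟩, by linarith, by linarith⟩
    have hv1 : volume ((⋃ j, Icc (x + c j) (x + c j + w)) ∩ Icc a (a + W))
        = volume (S ∩ Icc (a - x) (a + W - x)) := by
      rw [htrans]; exact measure_preimage_add volume (-x) _
    have hIccIoc : volume (S ∩ Icc (a - x) (a + W - x))
        = volume (S ∩ Ioc (a - x) (a + W - x)) := by
      refine le_antisymm ?_ (measure_mono (inter_subset_inter_right _ Ioc_subset_Icc_self))
      have hsub : S ∩ Icc (a - x) (a + W - x) ⊆ (S ∩ Ioc (a - x) (a + W - x)) ∪ {a - x} := by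
        rintro u ⟨huS, hu1, hu2⟩
        rcases eq_or_lt_of_le hu1 with h | h
        · exact Or.inr (by simp [h.symm])
        · exact Or.inl ⟨huS, h, hu2⟩
      calc volume (S ∩ Icc (a - x) (a + W - x))
          ≤ volume ((S ∩ Ioc (a - x) (a + W - x)) ∪ {a - x}) := measure_mono hsub
        _ ≤ volume (S ∩ Ioc (a - x) (a + W - x)) + volume ({a - x} : Set ℝ) :=
            measure_union_le _ _
        _ = volume (S ∩ Ioc (a - x) (a + W - x)) := by simp
    have hle : a - x ≤ a + W - x := by linarith
    rw [hg]
    simp only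
    rw [hv1, hIccIoc]
    have := Fadd (a - x) (a + W - x) hle
    rw [this]
    ring
  have hFdiff : ∀ t s : ℝ, t ≤ s → 0 ≤ F s - F t ∧ F s - F t ≤ s - t := by
    intro t s hts
    rw [Fadd t s hts]
    constructor
    · simp [ENNReal.toReal_nonneg]
    · have h1 : volume (S ∩ Ioc t s) ≤ volume (Ioc t s) := measure_mono inter_subset_right
      have h2 : (volume (S ∩ Ioc t s)).toReal ≤ (volume (Ioc t s)).toReal := by
        refine ENNReal.toReal_mono ?_ h1
        simp [Real.volume_Ioc]
      rw [Real.volume_Ioc] at h2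
      rw [ENNReal.toReal_ofReal (by linarith)] at h2
      linarith
  have hFcont : Continuous F := by
    refine (LipschitzWith.of_dist_le_mul (K := 1) fun s t => ?_).continuous
    rw [Real.dist_eq, Real.dist_eq]
    push_cast
    rw [one_mul]
    rcases le_total s t with h | h
    · have := hFdiff s t h
      rw [abs_sub_comm, abs_of_nonneg this.1]
      rw [abs_sub_comm, abs_of_nonneg (by linarith : (0:ℝ) ≤ t - s)]
      linarith [this.2]
    · have := hFdiff t s h
      rw [abs_of_nonneg this.1, abs_of_nonneg (by linarith : (0:ℝ) ≤ s - t)]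
      linarith [this.2]
  constructor
  · have : g = fun x => v * (F (a + W - x) - F (a - x)) := funext gF
    rw [this]
    exact continuous_const.mul
      ((hFcont.comp (by continuity)).sub (hFcont.comp (by continuity)))
  · -- local linearity of F away from endpoints
    have Floc : ∀ t : ℝ, (∀ j, t ≠ c j ∧ t ≠ c j + w) →
        ∃ δ > 0, ∃ α β : ℝ, ∀ u ∈ Ioo (t - δ) (t + δ), F u = α * u + β := by
      intro t ht
      by_cases hts : t ∈ S
      · obtain ⟨j, hj⟩ : ∃ j, t ∈ Icc (c j) (c j + w) := by
          simpa [hS, mem_iUnion] using hts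
        have h1 : c j < t := lt_of_le_of_ne hj.1 (Ne.symm (ht j).1)
        have h2 : t < c j + w := lt_of_le_of_ne hj.2 (ht j).2
        set δ := min (t - c j) (c j + w - t) with hδ
        have hδ1 : δ ≤ t - c j := min_le_left _ _
        have hδ2 : δ ≤ c j + w - t := min_le_right _ _
        have hδpos : 0 < δ := lt_min (by linarith) (by linarith)
        refine ⟨δ, hδpos, 1, F t - t, ?_⟩
        intro u hu
        have husub : ∀ z ∈ Ioo (t - δ) (t + δ), z ∈ S := by
          rintro z ⟨hz1, hz2⟩
          exact mem_iUnion.2 ⟨j, by constructor <;> [linarith; linarith]⟩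
        rcases le_total t u with h | h
        · have : S ∩ Ioc t u = Ioc t u := by
            refine inter_eq_self_of_subset_right ?_
            rintro z ⟨hz1, hz2⟩
            exact husub z ⟨by linarith [hu.1, hδpos], by linarith [hu.2]⟩
          rw [Fadd t u h, this, Real.volume_Ioc, ENNReal.toReal_ofReal (by linarith)]
          ring
        · have : S ∩ Ioc u t = Ioc u t := by
            refine inter_eq_self_of_subset_right ?_
            rintro z ⟨hz1, hz2⟩
            exact husub z ⟨by linarith [hu.1], by linarith [hu.2, hδpos]⟩
          have := Fadd u t h
          rw [‹S ∩ Ioc u t = Ioc u t›, Real.volume_Ioc,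
            ENNReal.toReal_ofReal (by linarith)] at this
          linarith
      · have hSc : IsClosed S := isClosed_iUnion_of_finite fun j => isClosed_Icc
        obtain ⟨ε, hε, hball⟩ := Metric.isOpen_iff.1 hSc.isOpen_compl t hts
        rw [Real.ball_eq_Ioo] at hball
        refine ⟨ε, hε, 0, F t, ?_⟩
        intro u hu
        have husub : ∀ z ∈ Ioo (t - ε) (t + ε), z ∉ S := fun z hz => hball hz
        rcases le_total t u with h | h
        · have : S ∩ Ioc t u = ∅ := by
            refine eq_empty_of_forall_notMem ?_
            rintro z ⟨hzS, hz1, hz2⟩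
            exact husub z ⟨by linarith [hu.1], by linarith [hu.2]⟩ hzS
          rw [Fadd t u h, this]
          simp
        · have : S ∩ Ioc u t = ∅ := by
            refine eq_empty_of_forall_notMem ?_
            rintro z ⟨hzS, hz1, hz2⟩
            exact husub z ⟨by linarith [hu.1], by linarith [hu.2]⟩ hzS
          have h' := Fadd u t h
          rw [this] at h'
          simp at h'
          simp [h']
    intro x hx
    simp only [mem_insert_iff, mem_singleton_iff, not_or] at hx
    have h1 : ∀ j, (a - x) ≠ c j ∧ (a - x) ≠ c j + w := by
      intro j
      have := hx j
      constructor <;> intro h <;> [exact this.2.1 (by linarith); exact this.1 (by linarith)]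
    have h2 : ∀ j, (a + W - x) ≠ c j ∧ (a + W - x) ≠ c j + w := by
      intro j
      have := hx j
      constructor <;> intro h <;>
        [exact this.2.2.2 (by linarith); exact this.2.2.1 (by linarith)]
    obtain ⟨δ₁, hδ₁, α₁, β₁, hl₁⟩ := Floc (a - x) h1
    obtain ⟨δ₂, hδ₂, α₂, β₂, hl₂⟩ := Floc (a + W - x) h2
    refine ⟨min δ₁ δ₂, lt_min hδ₁ hδ₂, v * (α₁ - α₂),
      v * (α₂ * (a + W) + β₂ - α₁ * a - β₁), ?_⟩
    intro y hy
    have hy1 : a - y ∈ Ioo (a - x - δ₁) (a - x + δ₁) := by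
      constructor <;> [linarith [hy.2, min_le_left δ₁ δ₂]; linarith [hy.1, min_le_left δ₁ δ₂]]
    have hy2 : a + W - y ∈ Ioo (a + W - x - δ₂) (a + W - x + δ₂) := by
      constructor <;> [linarith [hy.2, min_le_right δ₁ δ₂]; linarith [hy.1, min_le_right δ₁ δ₂]]
    rw [gF y, hl₁ _ hy1, hl₂ _ hy2]
    ring
end
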